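/- For Schwartz ψ: ℝ² → ℂ, real-valued A_j ∈ 𝒮(ℝ²), and any t ∈ ℝ, the covariant Gagliardo–Nirenberg-type inequality ‖Jψ‖_{L⁴} ≲ ‖ψ‖_{L^∞}^{1/2} ‖J^{(2)}ψ‖_{L²}^{1/2} holds, where J_k := x_k + 2it(∂_k + iA_k), Jψ = (J₁ψ, J₂ψ), and J^{(2)}ψ denotes the collection J_j J_k ψ. -/

import Mathlib

open MeasureTheory Complex SchwartzMap
open scoped ENNReal NNReal

noncomputable section

/-- Spatial covariant derivative `D_j = ∂_j + i A_j` on `ℝ²`. -/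
noncomputable def Dcov (A : Fin 2 → (Fin 2 → ℝ) → ℝ) (j : Fin 2) (f : (Fin 2 → ℝ) → ℂ) :
    (Fin 2 → ℝ) → ℂ :=
  fun x => fderiv ℝ f x (Pi.single j 1) + Complex.I * (A j x) * f x

/-- The covariant Galilean vector field `J_k = x_k + 2it D_k`. -/
noncomputable def Jcov (t : ℝ) (A : Fin 2 → (Fin 2 → ℝ) → ℝ) (k : Fin 2)
    (f : (Fin 2 → ℝ) → ℂ) : (Fin 2 → ℝ) → ℂ :=
  fun x => (x k : ℂ) * f x + 2 * Complex.I * (t : ℂ) * Dcov A k f x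

abbrev R2 := Fin 2 → ℝ
abbrev S2 := SchwartzMap R2 ℂ

def Complex.abs : AbsoluteValue ℂ ℝ := NormedField.toAbsoluteValue ℂ

lemma Complex.norm_eq_abs (z : ℂ) : ‖z‖ = Complex.abs z := rfl

lemma Complex.abs_ofReal (r : ℝ) : Complex.abs (r : ℂ) = |r| := Complex.norm_real r

lemma Complex.abs_conj (z : ℂ) : Complex.abs ((starRingEnd ℂ) z) = Complex.abs z :=
  Complex.norm_conj z

lemma Complex.sq_abs (z : ℂ) : Complex.abs z ^ 2 = Complex.normSq z := Complex.sq_norm z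

lemma Complex.continuous_abs : Continuous Complex.abs := continuous_norm

lemma ofReal_norm_eq_coe_nnnorm {E : Type*} [SeminormedAddCommGroup E] (a : E) :
    ENNReal.ofReal ‖a‖ = (‖a‖₊ : ℝ≥0∞) := ofReal_norm a

/-- multiplication by a real temperate-growth function, as a CLM on Schwartz space. -/
def mulTG {g : R2 → ℝ} (hg : g.HasTemperateGrowth) : S2 →L[ℝ] S2 :=
  SchwartzMap.bilinLeftCLM ((ContinuousLinearMap.lsmul ℝ ℝ : ℝ →L[ℝ] ℂ →L[ℝ] ℂ)).flip hg

@[simp] lemma mulTG_apply {g : R2 → ℝ} (hg : g.HasTemperateGrowth) (f : S2) (x : R2) :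
    mulTG hg f x = (g x : ℂ) * f x := by
  simp [mulTG, SchwartzMap.bilinLeftCLM, SchwartzMap.mkCLM, SchwartzMap.mkLM, Complex.real_smul]
  rfl

/-- pointwise conjugation on Schwartz space -/
def conjS (f : S2) : S2 :=
  SchwartzMap.bilinLeftCLM
    (((ContinuousLinearMap.lsmul ℝ ℝ : ℝ →L[ℝ] ℂ →L[ℝ] ℂ)).flip.comp
      ((starL' ℝ : ℂ ≃L[ℝ] ℂ) : ℂ →L[ℝ] ℂ))
    (Function.HasTemperateGrowth.const (1:ℝ)) f

@[simp] lemma conjS_apply (f : S2) (x : R2) :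
    conjS f x = (starRingEnd ℂ) (f x) := by
  simp [conjS, SchwartzMap.bilinLeftCLM, SchwartzMap.mkCLM, SchwartzMap.mkLM]
  rfl

/-- pointwise product of Schwartz functions -/
def mulS (f g : S2) : S2 :=
  SchwartzMap.bilinLeftCLM (ContinuousLinearMap.mul ℝ ℂ) g.hasTemperateGrowth f

@[simp] lemma mulS_apply (f g : S2) (x : R2) :
    mulS f g x = f x * g x := by
  simp [mulS, SchwartzMap.bilinLeftCLM, SchwartzMap.mkCLM, SchwartzMap.mkLM]
  rfl

@[simp] lemma SchwartzMap.neg_apply' (f : S2) (x : R2) : (-f) x = -(f x) := rfl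

/-- `J_k` as an operator on Schwartz space. -/
def JS (t : ℝ) (A : Fin 2 → SchwartzMap R2 ℝ) (k : Fin 2) (f : S2) : S2 :=
  mulTG (ContinuousLinearMap.proj k : R2 →L[ℝ] ℝ).hasTemperateGrowth f
    + (2 * Complex.I * t) • LineDeriv.lineDerivOp (Pi.single k 1 : R2) f
    + (-(2*t) : ℝ) • mulTG (A k).hasTemperateGrowth f

lemma JS_apply (t : ℝ) (A : Fin 2 → SchwartzMap R2 ℝ) (k : Fin 2) (f : S2) (x : R2) :
    JS t A k f x = (x k : ℂ) * f x + (2 * Complex.I * t) * fderiv ℝ (⇑f) x (Pi.single k 1)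
      + (-(2*t) * A k x : ℝ) * f x := by
  simp [JS, SchwartzMap.smul_apply, SchwartzMap.neg_apply', SchwartzMap.lineDerivOp_apply_eq_fderiv, Complex.real_smul,
    smul_eq_mul]
  push_cast
  ring

lemma JS_coe (t : ℝ) (A : Fin 2 → SchwartzMap R2 ℝ) (k : Fin 2) (f : S2) :
    ⇑(JS t A k f) = Jcov t (fun j => ⇑(A j)) k (⇑f) := by
  funext x
  rw [JS_apply]
  simp only [Jcov, Dcov]
  push_cast
  ring_nf
  simp [Complex.I_sq]
  ring

/-- key unfolding: `2it ∂_k f = J_k f - (x_k - 2 t A_k) f`. -/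
lemma two_I_t_fderiv (t : ℝ) (A : Fin 2 → SchwartzMap R2 ℝ) (k : Fin 2) (f : S2) (x : R2) :
    (2 * Complex.I * t) * fderiv ℝ (⇑f) x (Pi.single k 1)
      = JS t A k f x - ((x k : ℂ) - 2*t*A k x) * f x := by
  rw [JS_apply]
  push_cast
  ring

end

noncomputable section Main
open SchwartzMap
variable (t : ℝ) (A : Fin 2 → SchwartzMap R2 ℝ) (ψ : S2)

def UU : Fin 2 → S2 := fun j => JS t A j ψ
def WW : Fin 2 → Fin 2 → S2 := fun k j => JS t A k (UU t A ψ j)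
def NN : S2 := ∑ j : Fin 2, mulS (UU t A ψ j) (conjS (UU t A ψ j))
def GG (k : Fin 2) : S2 := mulS (conjS (UU t A ψ k)) (NN t A ψ)
def nre : R2 → ℝ := fun x => ∑ j : Fin 2, Complex.normSq (UU t A ψ j x)

lemma sumS_apply {ι : Type*} (s : Finset ι) (f : ι → S2) (x : R2) :
    (∑ i ∈ s, f i) x = ∑ i ∈ s, f i x := by
  simp

lemma NN_apply (x : R2) : NN t A ψ x = ((nre t A ψ x : ℝ) : ℂ) := by
  simp [NN, nre, sumS_apply, Complex.mul_conj]

lemma conj_fderiv (f : S2) (x : R2) (v : R2) :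
    fderiv ℝ (fun y => (starRingEnd ℂ) (f y)) x v = (starRingEnd ℂ) (fderiv ℝ (⇑f) x v) := by
  have h : (fun y => (starRingEnd ℂ) (f y)) = fun y => star (f y) := by
    funext y; rfl
  rw [h, fderiv_star]
  rfl

lemma hJ (k : Fin 2) (x : R2) (f : S2) :
    (2 * Complex.I * t) * fderiv ℝ (⇑f) x (Pi.single k 1)
      = JS t A k f x - ((x k - 2*t*A k x : ℝ) : ℂ) * f x := by
  rw [two_I_t_fderiv t A k f x]; push_cast; ring

lemma hJc (k : Fin 2) (x : R2) (f : S2) :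
    (2 * Complex.I * t) * (starRingEnd ℂ) (fderiv ℝ (⇑f) x (Pi.single k 1))
      = ((x k - 2*t*A k x : ℝ) : ℂ) * (starRingEnd ℂ) (f x)
        - (starRingEnd ℂ) (JS t A k f x) := by
  have h := congrArg (starRingEnd ℂ) (hJ t A k x f)
  simp only [map_mul, map_sub, Complex.conj_ofReal, Complex.conj_I, map_ofNat] at h
  linear_combination -h

lemma fderiv_mul_apply {f g : R2 → ℂ} {x : R2} (hf : DifferentiableAt ℝ f x)
    (hg : DifferentiableAt ℝ g x) (v : R2) :
    fderiv ℝ (fun y => f y * g y) x v = f x * fderiv ℝ g x v + g x * fderiv ℝ f x v := by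
  rw [fderiv_fun_mul hf hg]
  simp [smul_eq_mul]

lemma L1 (k j : Fin 2) (x : R2) :
    (2 * Complex.I * t) * fderiv ℝ (fun y => UU t A ψ j y * (starRingEnd ℂ) (UU t A ψ j y)) x
        (Pi.single k 1)
      = WW t A ψ k j x * (starRingEnd ℂ) (UU t A ψ j x)
        - UU t A ψ j x * (starRingEnd ℂ) (WW t A ψ k j x) := by
  rw [fderiv_mul_apply ((UU t A ψ j).differentiable.differentiableAt)
    (show DifferentiableAt ℝ (fun y => (starRingEnd ℂ) (UU t A ψ j y)) x from
      ((UU t A ψ j).differentiable.differentiableAt).star), conj_fderiv]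
  simp only [WW]
  linear_combination (starRingEnd ℂ) (UU t A ψ j x) * hJ t A k x (UU t A ψ j)
    + (UU t A ψ j x) * hJc t A k x (UU t A ψ j)

lemma NN_coe : ⇑(NN t A ψ) = fun y => ∑ j : Fin 2, UU t A ψ j y * (starRingEnd ℂ) (UU t A ψ j y) := by
  funext y; simp [NN, sumS_apply]

lemma L2 (k : Fin 2) (x : R2) :
    (2 * Complex.I * t) * fderiv ℝ (⇑(NN t A ψ)) x (Pi.single k 1)
      = ∑ j : Fin 2, (WW t A ψ k j x * (starRingEnd ℂ) (UU t A ψ j x)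
          - UU t A ψ j x * (starRingEnd ℂ) (WW t A ψ k j x)) := by
  rw [NN_coe, fderiv_fun_sum (fun j _ => show DifferentiableAt ℝ
    (fun y => UU t A ψ j y * (starRingEnd ℂ) (UU t A ψ j y)) x from
    ((UU t A ψ j).differentiable.differentiableAt).mul
    (show DifferentiableAt ℝ (fun y => (starRingEnd ℂ) (UU t A ψ j y)) x from
      ((UU t A ψ j).differentiable.differentiableAt).star))]
  rw [ContinuousLinearMap.sum_apply, Finset.mul_sum]
  exact Finset.sum_congr rfl fun j _ => L1 t A ψ k j x

lemma GG_coe (k : Fin 2) :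
    ⇑(GG t A ψ k) = fun y => (starRingEnd ℂ) (UU t A ψ k y) * NN t A ψ y := by
  funext y; simp [GG]

lemma L4 (k : Fin 2) (x : R2) :
    (2 * Complex.I * t) * fderiv ℝ (⇑(GG t A ψ k)) x (Pi.single k 1)
      = (((x k - 2*t*A k x : ℝ) : ℂ) * (starRingEnd ℂ) (UU t A ψ k x)
          - (starRingEnd ℂ) (WW t A ψ k k x)) * NN t A ψ x
        + (starRingEnd ℂ) (UU t A ψ k x)
          * ∑ j : Fin 2, (WW t A ψ k j x * (starRingEnd ℂ) (UU t A ψ j x)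
              - UU t A ψ j x * (starRingEnd ℂ) (WW t A ψ k j x)) := by
  rw [GG_coe, fderiv_mul_apply
    (show DifferentiableAt ℝ (fun y => (starRingEnd ℂ) (UU t A ψ k y)) x from
      ((UU t A ψ k).differentiable.differentiableAt).star)
    ((NN t A ψ).differentiable.differentiableAt), conj_fderiv]
  have h2 := L2 t A ψ k x
  have h3 := hJc t A k x (UU t A ψ k)
  simp only [WW] at *
  linear_combination (starRingEnd ℂ) (UU t A ψ k x) * h2 + (NN t A ψ x) * h3

lemma integrable_eqS (F : S2) {f : R2 → ℂ} (h : ∀ x, F x = f x) : Integrable f volume :=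
  F.integrable.congr (Filter.Eventually.of_forall h)

def VV (k : Fin 2) : S2 :=
  mulTG (ContinuousLinearMap.proj k : R2 →L[ℝ] ℝ).hasTemperateGrowth ψ
    + (-(2*t) : ℝ) • mulTG (A k).hasTemperateGrowth ψ

lemma VV_apply (k : Fin 2) (x : R2) :
    VV t A ψ k x = ((x k - 2*t*A k x : ℝ) : ℂ) * ψ x := by
  simp [VV, SchwartzMap.smul_apply, Complex.real_smul]
  push_cast; ring

def SIG (k : Fin 2) : S2 :=
  ∑ j : Fin 2, (mulS (WW t A ψ k j) (conjS (UU t A ψ j)) - mulS (UU t A ψ j) (conjS (WW t A ψ k j)))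

lemma SIG_apply (k : Fin 2) (x : R2) :
    SIG t A ψ k x = ∑ j : Fin 2, (WW t A ψ k j x * (starRingEnd ℂ) (UU t A ψ j x)
      - UU t A ψ j x * (starRingEnd ℂ) (WW t A ψ k j x)) := by
  simp [SIG, sumS_apply, SchwartzMap.sub_apply]

/-- The integrated-by-parts identity for each `k`. -/
lemma IK (k : Fin 2) :
    (∫ x : R2, UU t A ψ k x * (starRingEnd ℂ) (UU t A ψ k x) * NN t A ψ x)
      = (∫ x : R2, ψ x * (starRingEnd ℂ) (WW t A ψ k k x) * NN t A ψ x)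
        - ∫ x : R2, ψ x * (starRingEnd ℂ) (UU t A ψ k x) * SIG t A ψ k x := by
  -- integrability of all pieces
  have hg1 : Integrable (fun x => UU t A ψ k x * (starRingEnd ℂ) (UU t A ψ k x) * NN t A ψ x)
      volume := integrable_eqS (mulS (mulS (UU t A ψ k) (conjS (UU t A ψ k))) (NN t A ψ))
    (fun x => by simp)
  have hg2 : Integrable (fun x => ψ x * (starRingEnd ℂ) (WW t A ψ k k x) * NN t A ψ x) volume :=
    integrable_eqS (mulS (mulS ψ (conjS (WW t A ψ k k))) (NN t A ψ)) (fun x => by simp)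
  have hg3 : Integrable (fun x => ψ x * (starRingEnd ℂ) (UU t A ψ k x) * SIG t A ψ k x) volume :=
    integrable_eqS (mulS (mulS ψ (conjS (UU t A ψ k))) (SIG t A ψ k)) (fun x => by simp)
  have hg4 : Integrable (fun x => VV t A ψ k x * ((starRingEnd ℂ) (UU t A ψ k x) * NN t A ψ x))
      volume := integrable_eqS (mulS (VV t A ψ k) (GG t A ψ k))
    (fun x => by rw [mulS_apply, GG_coe])
  have hg5 : Integrable (fun x => fderiv ℝ (⇑ψ) x (Pi.single k 1) * GG t A ψ k x) volume :=
    integrable_eqS (mulS (LineDeriv.lineDerivOp (Pi.single k 1 : R2) ψ) (GG t A ψ k))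
    (fun x => by rw [mulS_apply, SchwartzMap.lineDerivOp_apply_eq_fderiv])
  have hg6 : Integrable (fun x => ψ x * fderiv ℝ (⇑(GG t A ψ k)) x (Pi.single k 1)) volume :=
    integrable_eqS (mulS ψ (LineDeriv.lineDerivOp (Pi.single k 1 : R2) (GG t A ψ k)))
    (fun x => by rw [mulS_apply, SchwartzMap.lineDerivOp_apply_eq_fderiv])
  have hg7 : Integrable (fun x => ψ x * GG t A ψ k x) volume :=
    integrable_eqS (mulS ψ (GG t A ψ k)) (fun x => by rw [mulS_apply])
  -- integration by parts
  have hIBP : ∫ x : R2, ψ x * fderiv ℝ (⇑(GG t A ψ k)) x (Pi.single k 1)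
      = - ∫ x : R2, fderiv ℝ (⇑ψ) x (Pi.single k 1) * GG t A ψ k x :=
    integral_mul_fderiv_eq_neg_fderiv_mul_of_integrable hg5 hg6 hg7
      (fun x _ => ψ.differentiable.differentiableAt)
      (fun x _ => (GG t A ψ k).differentiable.differentiableAt)
  -- step 1 : pointwise splitting of the left integrand
  have step1 : ∀ x : R2, UU t A ψ k x * (starRingEnd ℂ) (UU t A ψ k x) * NN t A ψ x
      = VV t A ψ k x * ((starRingEnd ℂ) (UU t A ψ k x) * NN t A ψ x)
        + (2 * Complex.I * ↑t) * (fderiv ℝ (⇑ψ) x (Pi.single k 1) * GG t A ψ k x) := by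
    intro x
    have h := hJ t A k x ψ
    have hG : GG t A ψ k x = (starRingEnd ℂ) (UU t A ψ k x) * NN t A ψ x := by
      rw [GG_coe]
    rw [VV_apply, hG]
    have hU : UU t A ψ k x = JS t A k ψ x := rfl
    linear_combination ((starRingEnd ℂ) (UU t A ψ k x) * NN t A ψ x) * hU
      - ((starRingEnd ℂ) (UU t A ψ k x) * NN t A ψ x) * h
  -- step 2 : pointwise identity for ψ * (c * ∂G)
  have step2 : ∀ x : R2, ψ x * ((2 * Complex.I * ↑t) * fderiv ℝ (⇑(GG t A ψ k)) x (Pi.single k 1))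
      = VV t A ψ k x * ((starRingEnd ℂ) (UU t A ψ k x) * NN t A ψ x)
        - ψ x * (starRingEnd ℂ) (WW t A ψ k k x) * NN t A ψ x
        + ψ x * (starRingEnd ℂ) (UU t A ψ k x) * SIG t A ψ k x := by
    intro x
    have h := L4 t A ψ k x
    rw [VV_apply, SIG_apply]
    linear_combination (ψ x) * h
  -- integrate
  calc (∫ x : R2, UU t A ψ k x * (starRingEnd ℂ) (UU t A ψ k x) * NN t A ψ x)
      = ∫ x : R2, (VV t A ψ k x * ((starRingEnd ℂ) (UU t A ψ k x) * NN t A ψ x)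
          + (2 * Complex.I * ↑t) * (fderiv ℝ (⇑ψ) x (Pi.single k 1) * GG t A ψ k x)) := by
        exact integral_congr_ae (Filter.Eventually.of_forall step1)
    _ = (∫ x : R2, VV t A ψ k x * ((starRingEnd ℂ) (UU t A ψ k x) * NN t A ψ x))
          + (2 * Complex.I * ↑t) * ∫ x : R2, fderiv ℝ (⇑ψ) x (Pi.single k 1) * GG t A ψ k x := by
        rw [integral_add hg4 (hg5.const_mul _), integral_const_mul]
    _ = (∫ x : R2, VV t A ψ k x * ((starRingEnd ℂ) (UU t A ψ k x) * NN t A ψ x))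
          - (2 * Complex.I * ↑t) * ∫ x : R2, ψ x * fderiv ℝ (⇑(GG t A ψ k)) x (Pi.single k 1) := by
        rw [hIBP]; ring
    _ = (∫ x : R2, VV t A ψ k x * ((starRingEnd ℂ) (UU t A ψ k x) * NN t A ψ x))
          - ∫ x : R2, ψ x * ((2 * Complex.I * ↑t) * fderiv ℝ (⇑(GG t A ψ k)) x (Pi.single k 1)) := by
        rw [← integral_const_mul]
        congr 1
        exact integral_congr_ae (Filter.Eventually.of_forall (fun x => by ring))
    _ = _ := by
        rw [integral_congr_ae (Filter.Eventually.of_forall step2)]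
        have hg42 : Integrable (fun x => VV t A ψ k x * ((starRingEnd ℂ) (UU t A ψ k x) * NN t A ψ x)
            - ψ x * (starRingEnd ℂ) (WW t A ψ k k x) * NN t A ψ x) volume := hg4.sub hg2
        rw [integral_add hg42 hg3, integral_sub hg4 hg2]
        ring

lemma nre_nonneg (x : R2) : 0 ≤ nre t A ψ x :=
  Finset.sum_nonneg fun j _ => Complex.normSq_nonneg _

lemma abs_NN (x : R2) : Complex.abs (NN t A ψ x) = nre t A ψ x := by
  rw [NN_apply, Complex.abs_ofReal, _root_.abs_of_nonneg (nre_nonneg t A ψ x)]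

lemma intS : Integrable (fun x => (nre t A ψ x)^2) volume := by
  refine ((mulS (NN t A ψ) (NN t A ψ)).integrable.norm).congr
    (Filter.Eventually.of_forall fun x => ?_)
  show ‖_‖ = _
  rw [Complex.norm_eq_abs, mulS_apply, map_mul, abs_NN]
  exact (sq (nre t A ψ x)).symm

lemma intWN (k j : Fin 2) : Integrable (fun x => Complex.abs (WW t A ψ k j x) * nre t A ψ x)
    volume := by
  refine ((mulS (WW t A ψ k j) (NN t A ψ)).integrable.norm).congr
    (Filter.Eventually.of_forall fun x => ?_)
  show ‖_‖ = _
  rw [Complex.norm_eq_abs, mulS_apply, map_mul, abs_NN]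

lemma EQ1 : ((∫ x : R2, (nre t A ψ x)^2 : ℝ) : ℂ)
    = ∑ k : Fin 2, ∫ x : R2, UU t A ψ k x * (starRingEnd ℂ) (UU t A ψ k x) * NN t A ψ x := by
  have hg1 : ∀ k : Fin 2, Integrable
      (fun x => UU t A ψ k x * (starRingEnd ℂ) (UU t A ψ k x) * NN t A ψ x) volume := fun k =>
    integrable_eqS (mulS (mulS (UU t A ψ k) (conjS (UU t A ψ k))) (NN t A ψ)) (fun x => by simp)
  rw [← integral_finset_sum _ (fun k _ => hg1 k)]
  rw [show ((∫ x : R2, (nre t A ψ x)^2 : ℝ) : ℂ) = ∫ x : R2, (((nre t A ψ x)^2 : ℝ) : ℂ) from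
    (integral_ofReal (𝕜 := ℂ)).symm]
  refine integral_congr_ae (Filter.Eventually.of_forall fun x => ?_)
  show (((nre t A ψ x)^2 : ℝ) : ℂ)
      = ∑ k : Fin 2, UU t A ψ k x * (starRingEnd ℂ) (UU t A ψ k x) * NN t A ψ x
  rw [← Finset.sum_mul]
  have : ∑ k : Fin 2, UU t A ψ k x * (starRingEnd ℂ) (UU t A ψ k x) = ((nre t A ψ x : ℝ) : ℂ) := by
    rw [nre]; push_cast
    exact Finset.sum_congr rfl fun k _ => (Complex.mul_conj _)
  rw [this, NN_apply, sq]
  push_cast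
  ring

lemma psi_memtop : MemLp (⇑ψ) ⊤ (volume : Measure R2) :=
  memLp_top_of_bound ψ.continuous.aestronglyMeasurable (SchwartzMap.seminorm ℝ 0 0 ψ)
    (Filter.Eventually.of_forall fun x => ψ.norm_le_seminorm ℝ x)

lemma psi_ae_bound : ∀ᵐ x : R2 ∂(volume : Measure R2),
    Complex.abs (ψ x) ≤ (eLpNorm (⇑ψ) ⊤ (volume : Measure R2)).toReal := by
  have h := ae_le_eLpNormEssSup (f := ⇑ψ) (μ := (volume : Measure R2))
  have hfin : eLpNorm (⇑ψ) ⊤ (volume : Measure R2) ≠ ⊤ := (psi_memtop ψ).eLpNorm_ne_top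
  filter_upwards [h] with x hx
  have h1 : (‖ψ x‖₊ : ℝ≥0∞) ≤ eLpNorm (⇑ψ) ⊤ (volume : Measure R2) := by
    rwa [eLpNorm_exponent_top]
  have h2 := ENNReal.toReal_mono hfin h1
  simpa [Complex.norm_eq_abs] using h2

lemma normSq_le_nre (k : Fin 2) (x : R2) :
    Complex.normSq (UU t A ψ k x) ≤ nre t A ψ x :=
  Finset.single_le_sum (f := fun j => Complex.normSq (UU t A ψ j x))
    (fun j _ => Complex.normSq_nonneg _) (Finset.mem_univ k)

lemma uu_mul_le_nre (k j : Fin 2) (x : R2) :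
    Complex.abs (UU t A ψ k x) * Complex.abs (UU t A ψ j x) ≤ nre t A ψ x := by
  nlinarith [sq_nonneg (Complex.abs (UU t A ψ k x) - Complex.abs (UU t A ψ j x)),
    Complex.sq_abs (UU t A ψ k x), Complex.sq_abs (UU t A ψ j x),
    normSq_le_nre t A ψ k x, normSq_le_nre t A ψ j x,
    AbsoluteValue.nonneg Complex.abs (UU t A ψ k x),
    AbsoluteValue.nonneg Complex.abs (UU t A ψ j x)]

lemma abs_SIG_le (k : Fin 2) (x : R2) :
    Complex.abs (UU t A ψ k x) * Complex.abs (SIG t A ψ k x)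
      ≤ ∑ j : Fin 2, 2 * (Complex.abs (WW t A ψ k j x) * nre t A ψ x) := by
  have h1 : Complex.abs (SIG t A ψ k x)
      ≤ ∑ j : Fin 2, 2 * (Complex.abs (WW t A ψ k j x) * Complex.abs (UU t A ψ j x)) := by
    rw [SIG_apply]
    refine (Complex.abs.sum_le _ _).trans ?_
    refine Finset.sum_le_sum fun j _ => ?_
    calc Complex.abs (WW t A ψ k j x * (starRingEnd ℂ) (UU t A ψ j x)
          - UU t A ψ j x * (starRingEnd ℂ) (WW t A ψ k j x))
        ≤ Complex.abs (WW t A ψ k j x * (starRingEnd ℂ) (UU t A ψ j x))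
          + Complex.abs (UU t A ψ j x * (starRingEnd ℂ) (WW t A ψ k j x)) :=
          Complex.abs.sub_le_add _ _
      _ ≤ 2 * (Complex.abs (WW t A ψ k j x) * Complex.abs (UU t A ψ j x)) := by
          rw [map_mul, map_mul, Complex.abs_conj, Complex.abs_conj]; ring_nf; rfl
  calc Complex.abs (UU t A ψ k x) * Complex.abs (SIG t A ψ k x)
      ≤ Complex.abs (UU t A ψ k x)
        * ∑ j : Fin 2, 2 * (Complex.abs (WW t A ψ k j x) * Complex.abs (UU t A ψ j x)) := by
        exact mul_le_mul_of_nonneg_left h1 (AbsoluteValue.nonneg _ _)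
    _ ≤ ∑ j : Fin 2, 2 * (Complex.abs (WW t A ψ k j x) * nre t A ψ x) := by
        rw [Finset.mul_sum]
        refine Finset.sum_le_sum fun j _ => ?_
        have := uu_mul_le_nre t A ψ k j x
        have hw := AbsoluteValue.nonneg Complex.abs (WW t A ψ k j x)
        nlinarith [AbsoluteValue.nonneg Complex.abs (UU t A ψ k x),
          AbsoluteValue.nonneg Complex.abs (UU t A ψ j x)]

lemma Ikj_nonneg (k j : Fin 2) : 0 ≤ ∫ x : R2, Complex.abs (WW t A ψ k j x) * nre t A ψ x :=
  integral_nonneg fun x => mul_nonneg (AbsoluteValue.nonneg _ _) (nre_nonneg t A ψ x)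

lemma T1_bound (k : Fin 2) :
    Complex.abs (∫ x : R2, ψ x * (starRingEnd ℂ) (WW t A ψ k k x) * NN t A ψ x)
      ≤ (eLpNorm (⇑ψ) ⊤ (volume : Measure R2)).toReal
        * ∫ x : R2, Complex.abs (WW t A ψ k k x) * nre t A ψ x := by
  set M := (eLpNorm (⇑ψ) ⊤ (volume : Measure R2)).toReal with hM
  have hg2 : Integrable (fun x => ψ x * (starRingEnd ℂ) (WW t A ψ k k x) * NN t A ψ x) volume :=
    integrable_eqS (mulS (mulS ψ (conjS (WW t A ψ k k))) (NN t A ψ)) (fun x => by simp)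
  calc Complex.abs (∫ x : R2, ψ x * (starRingEnd ℂ) (WW t A ψ k k x) * NN t A ψ x)
      ≤ ∫ x : R2, ‖ψ x * (starRingEnd ℂ) (WW t A ψ k k x) * NN t A ψ x‖ := by
        rw [← Complex.norm_eq_abs]; exact norm_integral_le_integral_norm _
    _ ≤ ∫ x : R2, M * (Complex.abs (WW t A ψ k k x) * nre t A ψ x) := by
        refine integral_mono_ae hg2.norm (((intWN t A ψ k k)).const_mul M) ?_
        filter_upwards [psi_ae_bound ψ] with x hx
        rw [Complex.norm_eq_abs, map_mul, map_mul, Complex.abs_conj, abs_NN]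
        have h1 : 0 ≤ Complex.abs (WW t A ψ k k x) * nre t A ψ x :=
          mul_nonneg (AbsoluteValue.nonneg _ _) (nre_nonneg t A ψ x)
        nlinarith [AbsoluteValue.nonneg Complex.abs (ψ x)]
    _ = M * ∫ x : R2, Complex.abs (WW t A ψ k k x) * nre t A ψ x := integral_const_mul M _

lemma T2_bound (k : Fin 2) :
    Complex.abs (∫ x : R2, ψ x * (starRingEnd ℂ) (UU t A ψ k x) * SIG t A ψ k x)
      ≤ (eLpNorm (⇑ψ) ⊤ (volume : Measure R2)).toReal
        * ∑ j : Fin 2, 2 * ∫ x : R2, Complex.abs (WW t A ψ k j x) * nre t A ψ x := by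
  set M := (eLpNorm (⇑ψ) ⊤ (volume : Measure R2)).toReal with hM
  have hg3 : Integrable (fun x => ψ x * (starRingEnd ℂ) (UU t A ψ k x) * SIG t A ψ k x) volume :=
    integrable_eqS (mulS (mulS ψ (conjS (UU t A ψ k))) (SIG t A ψ k)) (fun x => by simp)
  have hint : Integrable (fun x => M * ∑ j : Fin 2,
      2 * (Complex.abs (WW t A ψ k j x) * nre t A ψ x)) volume := by
    refine Integrable.const_mul ?_ M
    refine integrable_finset_sum _ fun j _ => ((intWN t A ψ k j).const_mul 2)
  calc Complex.abs (∫ x : R2, ψ x * (starRingEnd ℂ) (UU t A ψ k x) * SIG t A ψ k x)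
      ≤ ∫ x : R2, ‖ψ x * (starRingEnd ℂ) (UU t A ψ k x) * SIG t A ψ k x‖ := by
        rw [← Complex.norm_eq_abs]; exact norm_integral_le_integral_norm _
    _ ≤ ∫ x : R2, M * ∑ j : Fin 2, 2 * (Complex.abs (WW t A ψ k j x) * nre t A ψ x) := by
        refine integral_mono_ae hg3.norm hint ?_
        filter_upwards [psi_ae_bound ψ] with x hx
        rw [Complex.norm_eq_abs, map_mul, map_mul, Complex.abs_conj]
        have h1 := abs_SIG_le t A ψ k x
        have h2 : 0 ≤ Complex.abs (UU t A ψ k x) * Complex.abs (SIG t A ψ k x) :=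
          mul_nonneg (AbsoluteValue.nonneg _ _) (AbsoluteValue.nonneg _ _)
        have h3 : 0 ≤ M := ENNReal.toReal_nonneg
        have h4 : Complex.abs (ψ x) * (Complex.abs (UU t A ψ k x) * Complex.abs (SIG t A ψ k x))
            ≤ M * ∑ j : Fin 2, 2 * (Complex.abs (WW t A ψ k j x) * nre t A ψ x) := by
          have h5 : Complex.abs (ψ x) * (Complex.abs (UU t A ψ k x)
              * Complex.abs (SIG t A ψ k x)) ≤ M * (Complex.abs (UU t A ψ k x)
              * Complex.abs (SIG t A ψ k x)) := mul_le_mul_of_nonneg_right hx h2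
          exact h5.trans (mul_le_mul_of_nonneg_left h1 h3)
        calc Complex.abs (ψ x) * Complex.abs (UU t A ψ k x) * Complex.abs (SIG t A ψ k x)
            = Complex.abs (ψ x) * (Complex.abs (UU t A ψ k x) * Complex.abs (SIG t A ψ k x)) := by
              ring
          _ ≤ _ := h4
    _ = M * ∑ j : Fin 2, 2 * ∫ x : R2, Complex.abs (WW t A ψ k j x) * nre t A ψ x := by
        rw [integral_const_mul]
        congr 1
        rw [integral_finset_sum _ fun j _ => ((intWN t A ψ k j).const_mul 2)]
        exact Finset.sum_congr rfl fun j _ => integral_const_mul 2 _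

lemma Sle : (∫ x : R2, (nre t A ψ x)^2)
    ≤ 3 * (eLpNorm (⇑ψ) ⊤ (volume : Measure R2)).toReal
      * ∑ k : Fin 2, ∑ j : Fin 2, ∫ x : R2, Complex.abs (WW t A ψ k j x) * nre t A ψ x := by
  set M := (eLpNorm (⇑ψ) ⊤ (volume : Measure R2)).toReal with hM
  have hM0 : 0 ≤ M := ENNReal.toReal_nonneg
  have hS0 : 0 ≤ ∫ x : R2, (nre t A ψ x)^2 := integral_nonneg fun x => sq_nonneg _
  have habs : (∫ x : R2, (nre t A ψ x)^2)
      = Complex.abs ((∫ x : R2, (nre t A ψ x)^2 : ℝ) : ℂ) := by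
    rw [Complex.abs_ofReal, _root_.abs_of_nonneg hS0]
  rw [habs, EQ1 t A ψ]
  have hIK : ∀ k : Fin 2, (∫ x : R2, UU t A ψ k x * (starRingEnd ℂ) (UU t A ψ k x) * NN t A ψ x)
      = (∫ x : R2, ψ x * (starRingEnd ℂ) (WW t A ψ k k x) * NN t A ψ x)
        - ∫ x : R2, ψ x * (starRingEnd ℂ) (UU t A ψ k x) * SIG t A ψ k x := IK t A ψ
  calc Complex.abs (∑ k : Fin 2, ∫ x : R2,
        UU t A ψ k x * (starRingEnd ℂ) (UU t A ψ k x) * NN t A ψ x)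
      ≤ ∑ k : Fin 2, Complex.abs (∫ x : R2,
          UU t A ψ k x * (starRingEnd ℂ) (UU t A ψ k x) * NN t A ψ x) := Complex.abs.sum_le _ _
    _ ≤ ∑ k : Fin 2, (M * (∫ x : R2, Complex.abs (WW t A ψ k k x) * nre t A ψ x)
          + M * ∑ j : Fin 2, 2 * ∫ x : R2, Complex.abs (WW t A ψ k j x) * nre t A ψ x) := by
        refine Finset.sum_le_sum fun k _ => ?_
        rw [hIK k]
        exact (Complex.abs.sub_le_add _ _).trans (add_le_add (T1_bound t A ψ k) (T2_bound t A ψ k))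
    _ ≤ 3 * M * ∑ k : Fin 2, ∑ j : Fin 2,
          ∫ x : R2, Complex.abs (WW t A ψ k j x) * nre t A ψ x := by
        have h00 := Ikj_nonneg t A ψ 0 0
        have h01 := Ikj_nonneg t A ψ 0 1
        have h10 := Ikj_nonneg t A ψ 1 0
        have h11 := Ikj_nonneg t A ψ 1 1
        simp only [Fin.sum_univ_two]
        nlinarith [mul_nonneg hM0 h00, mul_nonneg hM0 h01, mul_nonneg hM0 h10,
          mul_nonneg hM0 h11]

lemma intW2 (k j : Fin 2) : Integrable (fun x => (Complex.abs (WW t A ψ k j x))^2) volume := by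
  refine ((mulS (WW t A ψ k j) (conjS (WW t A ψ k j))).integrable.norm).congr
    (Filter.Eventually.of_forall fun x => ?_)
  show ‖_‖ = _
  rw [Complex.norm_eq_abs, mulS_apply, conjS_apply, map_mul, Complex.abs_conj]
  exact (sq (Complex.abs (WW t A ψ k j x))).symm

lemma memL2_absW (k j : Fin 2) :
    MemLp (fun x => Complex.abs (WW t A ψ k j x)) 2 (volume : Measure R2) := by
  refine (memLp_two_iff_integrable_sq ?_).mpr (intW2 t A ψ k j)
  exact (Complex.continuous_abs.comp (WW t A ψ k j).continuous).aestronglyMeasurable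

lemma nre_continuous : Continuous (nre t A ψ) := by
  refine continuous_finset_sum _ fun j _ => ?_
  exact Complex.continuous_normSq.comp (UU t A ψ j).continuous

lemma memL2_nre : MemLp (nre t A ψ) 2 (volume : Measure R2) :=
  (memLp_two_iff_integrable_sq (nre_continuous t A ψ).aestronglyMeasurable).mpr (intS t A ψ)

lemma CS (k j : Fin 2) : (∫ x : R2, Complex.abs (WW t A ψ k j x) * nre t A ψ x)
    ≤ Real.sqrt (∫ x : R2, (Complex.abs (WW t A ψ k j x))^2)
      * Real.sqrt (∫ x : R2, (nre t A ψ x)^2) := by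
  have hpq : Real.HolderConjugate 2 2 := Real.HolderConjugate.two_two
  have hm1 : MemLp (fun x => Complex.abs (WW t A ψ k j x)) (ENNReal.ofReal 2)
      (volume : Measure R2) := by
    rw [ENNReal.ofReal_ofNat]; exact memL2_absW t A ψ k j
  have hm2 : MemLp (nre t A ψ) (ENNReal.ofReal 2) (volume : Measure R2) := by
    rw [ENNReal.ofReal_ofNat]; exact memL2_nre t A ψ
  have h := integral_mul_le_Lp_mul_Lq_of_nonneg hpq
    (Filter.Eventually.of_forall fun x => AbsoluteValue.nonneg Complex.abs _)
    (Filter.Eventually.of_forall fun x => nre_nonneg t A ψ x) hm1 hm2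
  simp only [Real.rpow_two] at h
  rw [Real.sqrt_eq_rpow, Real.sqrt_eq_rpow]
  exact h

lemma S_le_Ksq : (∫ x : R2, (nre t A ψ x)^2)
    ≤ (3 * (eLpNorm (⇑ψ) ⊤ (volume : Measure R2)).toReal
        * ∑ k : Fin 2, ∑ j : Fin 2,
            Real.sqrt (∫ x : R2, (Complex.abs (WW t A ψ k j x))^2))^2 := by
  set M := (eLpNorm (⇑ψ) ⊤ (volume : Measure R2)).toReal with hM
  have hM0 : 0 ≤ M := ENNReal.toReal_nonneg
  set S := ∫ x : R2, (nre t A ψ x)^2 with hS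
  set K := 3 * M * ∑ k : Fin 2, ∑ j : Fin 2,
      Real.sqrt (∫ x : R2, (Complex.abs (WW t A ψ k j x))^2) with hK
  have hS0 : 0 ≤ S := integral_nonneg fun x => sq_nonneg _
  have hK0 : 0 ≤ K := by
    refine mul_nonneg (by positivity) ?_
    exact Finset.sum_nonneg fun k _ => Finset.sum_nonneg fun j _ => Real.sqrt_nonneg _
  have h1 : S ≤ K * Real.sqrt S := by
    calc S ≤ 3 * M * ∑ k : Fin 2, ∑ j : Fin 2,
          ∫ x : R2, Complex.abs (WW t A ψ k j x) * nre t A ψ x := Sle t A ψ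
      _ ≤ 3 * M * ∑ k : Fin 2, ∑ j : Fin 2,
          Real.sqrt (∫ x : R2, (Complex.abs (WW t A ψ k j x))^2) * Real.sqrt S := by
          refine mul_le_mul_of_nonneg_left ?_ (by positivity)
          exact Finset.sum_le_sum fun k _ => Finset.sum_le_sum fun j _ => CS t A ψ k j
      _ = K * Real.sqrt S := by
          have he : ∑ k : Fin 2, ∑ j : Fin 2,
              Real.sqrt (∫ x : R2, (Complex.abs (WW t A ψ k j x))^2) * Real.sqrt S
              = (∑ k : Fin 2, ∑ j : Fin 2,
                  Real.sqrt (∫ x : R2, (Complex.abs (WW t A ψ k j x))^2)) * Real.sqrt S := by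
            rw [Finset.sum_mul]
            exact Finset.sum_congr rfl fun k _ => by rw [Finset.sum_mul]
          rw [hK, he]; ring
  nlinarith [Real.sq_sqrt hS0, Real.sqrt_nonneg S, sq_nonneg (Real.sqrt S - K)]

lemma intSumSq : Integrable (fun x => (∑ p : Fin 2 × Fin 2, Complex.abs (WW t A ψ p.1 p.2 x))^2)
    volume := by
  have h : ∀ x : R2, (∑ p : Fin 2 × Fin 2, Complex.abs (WW t A ψ p.1 p.2 x))^2
      = ∑ p : Fin 2 × Fin 2, ∑ q : Fin 2 × Fin 2,
          Complex.abs (WW t A ψ p.1 p.2 x) * Complex.abs (WW t A ψ q.1 q.2 x) := by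
    intro x; rw [sq, Finset.sum_mul_sum]
  refine (integrable_finset_sum _ fun p _ => integrable_finset_sum _ fun q _ => ?_).congr
    (Filter.Eventually.of_forall fun x => (h x).symm)
  refine ((mulS (WW t A ψ p.1 p.2) (WW t A ψ q.1 q.2)).integrable.norm).congr
    (Filter.Eventually.of_forall fun x => ?_)
  show ‖_‖ = _
  rw [Complex.norm_eq_abs, mulS_apply, map_mul]

/-- Covariant Gagliardo–Nirenberg inequality for `J`, for Schwartz `ψ` and
Schwartz real potentials: `‖Jψ‖_{L⁴} ≲ ‖ψ‖_{L∞}^{1/2} ‖J⁽²⁾ψ‖_{L²}^{1/2}`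
with an absolute constant. -/
theorem covariant_gagliardo_nirenberg_J :
    ∃ C : ℝ, 0 < C ∧
      ∀ (ψ : SchwartzMap (Fin 2 → ℝ) ℂ) (A : Fin 2 → SchwartzMap (Fin 2 → ℝ) ℝ) (t : ℝ),
        eLpNorm (fun x => (fun j : Fin 2 =>
            Jcov t (fun j => (A j : (Fin 2 → ℝ) → ℝ)) j (ψ : (Fin 2 → ℝ) → ℂ) x)) 4
            (volume : Measure (Fin 2 → ℝ))
          ≤ ENNReal.ofReal C
            * (eLpNorm (ψ : (Fin 2 → ℝ) → ℂ) ⊤ (volume : Measure (Fin 2 → ℝ))) ^ ((1:ℝ)/2)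
            * (eLpNorm (fun x => (fun p : Fin 2 × Fin 2 =>
                  Jcov t (fun j => (A j : (Fin 2 → ℝ) → ℝ)) p.1
                    (Jcov t (fun j => (A j : (Fin 2 → ℝ) → ℝ)) p.2
                      (ψ : (Fin 2 → ℝ) → ℂ)) x)) 2
                (volume : Measure (Fin 2 → ℝ))) ^ ((1:ℝ)/2) := by
  refine ⟨12, by norm_num, fun ψ A t => ?_⟩
  -- rewrite the two vector-valued functions in terms of the Schwartz maps `UU`, `WW`
  have hu : (fun x => (fun j : Fin 2 =>
      Jcov t (fun j => (A j : (Fin 2 → ℝ) → ℝ)) j (ψ : (Fin 2 → ℝ) → ℂ) x))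
      = fun x : R2 => (fun j : Fin 2 => UU t A ψ j x) := by
    funext x; funext j
    rw [← JS_coe]; rfl
  have hw : (fun x => (fun p : Fin 2 × Fin 2 =>
        Jcov t (fun j => (A j : (Fin 2 → ℝ) → ℝ)) p.1
          (Jcov t (fun j => (A j : (Fin 2 → ℝ) → ℝ)) p.2 (ψ : (Fin 2 → ℝ) → ℂ)) x))
      = fun x : R2 => (fun p : Fin 2 × Fin 2 => WW t A ψ p.1 p.2 x) := by
    funext x; funext p
    rw [show Jcov t (fun j => (A j : (Fin 2 → ℝ) → ℝ)) p.2 (ψ : (Fin 2 → ℝ) → ℂ)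
        = ⇑(UU t A ψ p.2) from (JS_coe t A p.2 ψ).symm]
    rw [← JS_coe]; rfl
  rw [hu, hw]
  set S := ∫ x : R2, (nre t A ψ x)^2 with hS
  have hS0 : 0 ≤ S := integral_nonneg fun x => sq_nonneg _
  set Eψ := eLpNorm (⇑ψ) ⊤ (volume : Measure R2) with hEψ
  have hEψfin : Eψ ≠ ⊤ := (psi_memtop ψ).eLpNorm_ne_top
  set Ew := eLpNorm (fun x : R2 => (fun p : Fin 2 × Fin 2 => WW t A ψ p.1 p.2 x)) 2
      (volume : Measure R2) with hEw
  -- Step A : the L⁴ norm is bounded by (ofReal S)^(1/4)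
  have hA : eLpNorm (fun x : R2 => (fun j : Fin 2 => UU t A ψ j x)) 4 (volume : Measure R2)
      ≤ (ENNReal.ofReal S) ^ ((1:ℝ)/4) := by
    rw [eLpNorm_eq_lintegral_rpow_enorm_toReal (by norm_num) (by norm_num)]
    have htr : ((4 : ℝ≥0∞)).toReal = (4:ℝ) := by norm_num
    rw [htr]
    refine ENNReal.rpow_le_rpow ?_ (by norm_num)
    have hpt : ∀ x : R2, ((‖(fun j : Fin 2 => UU t A ψ j x)‖₊ : ℝ≥0∞)) ^ (4:ℝ)
        ≤ ENNReal.ofReal ((nre t A ψ x)^2) := by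
      intro x
      have h1 : ‖(fun j : Fin 2 => UU t A ψ j x)‖ ≤ Real.sqrt (nre t A ψ x) := by
        refine (pi_norm_le_iff_of_nonneg (Real.sqrt_nonneg _)).mpr fun j => ?_
        rw [Complex.norm_eq_abs]
        rw [show Complex.abs (UU t A ψ j x) = Real.sqrt ((Complex.abs (UU t A ψ j x))^2) from
          (Real.sqrt_sq (AbsoluteValue.nonneg _ _)).symm]
        refine Real.sqrt_le_sqrt ?_
        rw [Complex.sq_abs]
        exact normSq_le_nre t A ψ j x
      calc ((‖(fun j : Fin 2 => UU t A ψ j x)‖₊ : ℝ≥0∞)) ^ (4:ℝ)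
          = ENNReal.ofReal (‖(fun j : Fin 2 => UU t A ψ j x)‖ ^ (4:ℝ)) := by
            rw [← ofReal_norm_eq_coe_nnnorm,
              ENNReal.ofReal_rpow_of_nonneg (norm_nonneg _) (by norm_num)]
        _ ≤ ENNReal.ofReal ((nre t A ψ x)^2) := by
            refine ENNReal.ofReal_le_ofReal ?_
            have h2 : ‖(fun j : Fin 2 => UU t A ψ j x)‖ ^ (4:ℝ)
                ≤ (Real.sqrt (nre t A ψ x)) ^ (4:ℝ) :=
              Real.rpow_le_rpow (norm_nonneg _) h1 (by norm_num)
            refine h2.trans ?_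
            rw [show ((4:ℝ) = ((4:ℕ):ℝ)) by norm_num, Real.rpow_natCast]
            rw [show (Real.sqrt (nre t A ψ x))^(4:ℕ) = ((Real.sqrt (nre t A ψ x))^2)^2 by ring]
            rw [Real.sq_sqrt (nre_nonneg t A ψ x)]
      -- done
    calc ∫⁻ x : R2, ((‖(fun j : Fin 2 => UU t A ψ j x)‖₊ : ℝ≥0∞)) ^ (4:ℝ)
        ≤ ∫⁻ x : R2, ENNReal.ofReal ((nre t A ψ x)^2) := lintegral_mono hpt
      _ = ENNReal.ofReal S :=
          (MeasureTheory.ofReal_integral_eq_lintegral_ofReal (intS t A ψ)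
            (Filter.Eventually.of_forall fun x => sq_nonneg _)).symm
  -- Step B : finiteness of Ew and component bounds
  have hwpt : ∀ x : R2, ((‖(fun p : Fin 2 × Fin 2 => WW t A ψ p.1 p.2 x)‖₊ : ℝ≥0∞)) ^ (2:ℝ)
      ≤ ENNReal.ofReal ((∑ p : Fin 2 × Fin 2, Complex.abs (WW t A ψ p.1 p.2 x))^2) := by
    intro x
    have h1 : ‖(fun p : Fin 2 × Fin 2 => WW t A ψ p.1 p.2 x)‖
        ≤ ∑ p : Fin 2 × Fin 2, Complex.abs (WW t A ψ p.1 p.2 x) := by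
      refine (pi_norm_le_iff_of_nonneg (Finset.sum_nonneg fun p _ =>
        AbsoluteValue.nonneg _ _)).mpr fun p => ?_
      rw [Complex.norm_eq_abs]
      exact Finset.single_le_sum (f := fun q : Fin 2 × Fin 2 => Complex.abs (WW t A ψ q.1 q.2 x))
        (fun q _ => AbsoluteValue.nonneg _ _) (Finset.mem_univ p)
    calc ((‖(fun p : Fin 2 × Fin 2 => WW t A ψ p.1 p.2 x)‖₊ : ℝ≥0∞)) ^ (2:ℝ)
        = ENNReal.ofReal (‖(fun p : Fin 2 × Fin 2 => WW t A ψ p.1 p.2 x)‖ ^ (2:ℝ)) := by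
          rw [← ofReal_norm_eq_coe_nnnorm,
            ENNReal.ofReal_rpow_of_nonneg (norm_nonneg _) (by norm_num)]
      _ ≤ ENNReal.ofReal ((∑ p : Fin 2 × Fin 2, Complex.abs (WW t A ψ p.1 p.2 x))^2) := by
          refine ENNReal.ofReal_le_ofReal ?_
          rw [Real.rpow_two]
          exact pow_le_pow_left₀ (norm_nonneg _) h1 2
  have hL : (∫⁻ x : R2, ((‖(fun p : Fin 2 × Fin 2 => WW t A ψ p.1 p.2 x)‖₊ : ℝ≥0∞)) ^ (2:ℝ))
      ≤ ENNReal.ofReal (∫ x : R2,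
          (∑ p : Fin 2 × Fin 2, Complex.abs (WW t A ψ p.1 p.2 x))^2) := by
    calc _ ≤ ∫⁻ x : R2, ENNReal.ofReal
          ((∑ p : Fin 2 × Fin 2, Complex.abs (WW t A ψ p.1 p.2 x))^2) := lintegral_mono hwpt
      _ = _ := (MeasureTheory.ofReal_integral_eq_lintegral_ofReal (intSumSq t A ψ)
          (Filter.Eventually.of_forall fun x => sq_nonneg _)).symm
  have hEwform : Ew = (∫⁻ x : R2,
      ((‖(fun p : Fin 2 × Fin 2 => WW t A ψ p.1 p.2 x)‖₊ : ℝ≥0∞)) ^ (2:ℝ)) ^ ((1:ℝ)/2) := by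
    rw [hEw, eLpNorm_eq_lintegral_rpow_enorm_toReal (by norm_num) (by norm_num)]
    norm_num
    rfl
  have hLfin : (∫⁻ x : R2,
      ((‖(fun p : Fin 2 × Fin 2 => WW t A ψ p.1 p.2 x)‖₊ : ℝ≥0∞)) ^ (2:ℝ)) ≠ ⊤ :=
    (lt_of_le_of_lt hL ENNReal.ofReal_lt_top).ne
  have hEwfin : Ew ≠ ⊤ := by
    rw [hEwform]
    exact (ENNReal.rpow_lt_top_of_nonneg (by norm_num) hLfin).ne
  have hcomp : ∀ k j : Fin 2, Real.sqrt (∫ x : R2, (Complex.abs (WW t A ψ k j x))^2)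
      ≤ Ew.toReal := by
    intro k j
    have h1 : ENNReal.ofReal (∫ x : R2, (Complex.abs (WW t A ψ k j x))^2)
        ≤ (∫⁻ x : R2, ((‖(fun p : Fin 2 × Fin 2 => WW t A ψ p.1 p.2 x)‖₊ : ℝ≥0∞)) ^ (2:ℝ)) := by
      rw [MeasureTheory.ofReal_integral_eq_lintegral_ofReal (intW2 t A ψ k j)
        (Filter.Eventually.of_forall fun x => sq_nonneg _)]
      refine lintegral_mono fun x => ?_
      calc ENNReal.ofReal ((Complex.abs (WW t A ψ k j x))^2)
          = ((‖WW t A ψ k j x‖₊ : ℝ≥0∞)) ^ (2:ℝ) := by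
            rw [← ofReal_norm_eq_coe_nnnorm,
              ENNReal.ofReal_rpow_of_nonneg (norm_nonneg _) (by norm_num), Real.rpow_two]
            rfl
        _ ≤ ((‖(fun p : Fin 2 × Fin 2 => WW t A ψ p.1 p.2 x)‖₊ : ℝ≥0∞)) ^ (2:ℝ) := by
            refine ENNReal.rpow_le_rpow ?_ (by norm_num)
            have := norm_le_pi_norm (fun p : Fin 2 × Fin 2 => WW t A ψ p.1 p.2 x) (k, j)
            exact_mod_cast ENNReal.coe_le_coe.mpr (by exact_mod_cast this)
    have h2 : (∫ x : R2, (Complex.abs (WW t A ψ k j x))^2) ≤ (∫⁻ x : R2,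
        ((‖(fun p : Fin 2 × Fin 2 => WW t A ψ p.1 p.2 x)‖₊ : ℝ≥0∞)) ^ (2:ℝ)).toReal := by
      have h3 := ENNReal.toReal_mono hLfin h1
      rwa [ENNReal.toReal_ofReal (integral_nonneg fun x => sq_nonneg _)] at h3
    have h4 : Ew.toReal = Real.sqrt (∫⁻ x : R2,
        ((‖(fun p : Fin 2 × Fin 2 => WW t A ψ p.1 p.2 x)‖₊ : ℝ≥0∞)) ^ (2:ℝ)).toReal := by
      rw [hEwform, Real.sqrt_eq_rpow, ← ENNReal.toReal_rpow]
    rw [h4]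
    exact Real.sqrt_le_sqrt h2
  -- Step C : combine
  have hSK := S_le_Ksq t A ψ
  set K := 3 * Eψ.toReal * ∑ k : Fin 2, ∑ j : Fin 2,
      Real.sqrt (∫ x : R2, (Complex.abs (WW t A ψ k j x))^2) with hKdef
  have hK0 : 0 ≤ K := by
    refine mul_nonneg (by positivity) ?_
    exact Finset.sum_nonneg fun k _ => Finset.sum_nonneg fun j _ => Real.sqrt_nonneg _
  have hK12 : K ≤ 12 * Eψ.toReal * Ew.toReal := by
    have h00 := hcomp 0 0
    have h01 := hcomp 0 1
    have h10 := hcomp 1 0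
    have h11 := hcomp 1 1
    have hEψ0 : (0:ℝ) ≤ Eψ.toReal := ENNReal.toReal_nonneg
    rw [hKdef]
    simp only [Fin.sum_univ_two]
    nlinarith [Real.sqrt_nonneg (∫ x : R2, (Complex.abs (WW t A ψ 0 0 x))^2)]
  calc eLpNorm (fun x : R2 => (fun j : Fin 2 => UU t A ψ j x)) 4 (volume : Measure R2)
      ≤ (ENNReal.ofReal S) ^ ((1:ℝ)/4) := hA
    _ ≤ (ENNReal.ofReal (K^2)) ^ ((1:ℝ)/4) :=
        ENNReal.rpow_le_rpow (ENNReal.ofReal_le_ofReal hSK) (by norm_num)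
    _ = (ENNReal.ofReal K) ^ ((1:ℝ)/2) := by
        rw [ENNReal.ofReal_pow hK0]
        rw [show ((ENNReal.ofReal K)^(2:ℕ)) = (ENNReal.ofReal K)^((2:ℕ):ℝ) from
          (ENNReal.rpow_natCast _ 2).symm]
        rw [← ENNReal.rpow_mul]
        norm_num
    _ ≤ (ENNReal.ofReal (12 * Eψ.toReal * Ew.toReal)) ^ ((1:ℝ)/2) :=
        ENNReal.rpow_le_rpow (ENNReal.ofReal_le_ofReal hK12) (by norm_num)
    _ = (ENNReal.ofReal 12 * Eψ * Ew) ^ ((1:ℝ)/2) := by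
        rw [ENNReal.ofReal_mul (by positivity), ENNReal.ofReal_mul (by norm_num),
          ENNReal.ofReal_toReal hEψfin, ENNReal.ofReal_toReal hEwfin]
    _ = (ENNReal.ofReal 12) ^ ((1:ℝ)/2) * Eψ ^ ((1:ℝ)/2) * Ew ^ ((1:ℝ)/2) := by
        rw [ENNReal.mul_rpow_of_nonneg _ _ (by norm_num : (0:ℝ) ≤ 1/2),
          ENNReal.mul_rpow_of_nonneg _ _ (by norm_num : (0:ℝ) ≤ 1/2)]
    _ ≤ ENNReal.ofReal 12 * Eψ ^ ((1:ℝ)/2) * Ew ^ ((1:ℝ)/2) := by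
        refine mul_le_mul_left (mul_le_mul_left ?_ _) _
        calc (ENNReal.ofReal 12) ^ ((1:ℝ)/2) ≤ (ENNReal.ofReal 12) ^ (1:ℝ) := by
              refine ENNReal.rpow_le_rpow_of_exponent_le ?_ (by norm_num)
              rw [show ENNReal.ofReal 12 = (12:ℝ≥0∞) by
                rw [ENNReal.ofReal_ofNat]]
              norm_num
          _ = ENNReal.ofReal 12 := ENNReal.rpow_one _
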